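/- Let n ≥ 10 be an even integer. If G is a graph on n vertices in which every vertex has triangle-degree at least C(n−3, 2), then e(G) ≥ C(n,2) − n/2. -/

import Mathlib

open Finset SimpleGraph

/-- The triangle-degree of `v`: the number of triangles of `G` containing `v`. -/
def triangleDeg {V : Type*} [Fintype V] [DecidableEq V]
    (G : SimpleGraph V) [DecidableRel G.Adj] (v : V) : ℕ :=
  ((G.cliqueFinset 3).filter (fun s => v ∈ s)).card

lemma aux_card_compl {V : Type} [Fintype V] [DecidableEq V] (G : SimpleGraph V)
    [DecidableRel G.Adj] [DecidableRel Gᶜ.Adj] :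
    G.edgeFinset.card + Gᶜ.edgeFinset.card = (Fintype.card V).choose 2 := by
  rw [← card_edgeFinset_top_eq_card_choose_two,
    ← card_union_of_disjoint (disjoint_edgeFinset.mpr disjoint_compl_right)]
  congr 1
  ext e
  refine Sym2.ind (fun a b => ?_) e
  simp only [mem_union, mem_edgeFinset, mem_edgeSet, compl_adj, top_adj]
  constructor
  · rintro (h | h)
    · exact h.ne
    · exact h.1
  · intro hab
    by_cases h : G.Adj a b
    · exact Or.inl h
    · exact Or.inr ⟨hab, h⟩

lemma aux_tri_le {V : Type} [Fintype V] [DecidableEq V] (G : SimpleGraph V)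
    [DecidableRel G.Adj] (v : V) :
    triangleDeg G v ≤
      (((G.neighborFinset v).powersetCard 2).filter
        (fun t => ∀ x ∈ t, ∀ y ∈ t, x ≠ y → G.Adj x y)).card := by
  apply Finset.card_le_card_of_injOn (fun s => s.erase v)
  · intro s hs
    simp only [mem_coe, mem_filter, mem_cliqueFinset_iff] at hs
    obtain ⟨⟨hcl, hcard⟩, hv⟩ := hs
    have hsub : s.erase v ⊆ G.neighborFinset v := by
      intro x hx
      rw [mem_neighborFinset]
      exact hcl (by simpa using hv) (by simpa using mem_of_mem_erase hx)
        (Ne.symm (ne_of_mem_erase hx))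
    refine mem_filter.mpr ⟨mem_powersetCard.mpr ⟨hsub, ?_⟩, ?_⟩
    · rw [card_erase_of_mem hv, hcard]
    · intro x hx y hy hxy
      exact hcl (by simpa using mem_of_mem_erase hx) (by simpa using mem_of_mem_erase hy) hxy
  · intro s₁ h₁ s₂ h₂ h
    simp only [coe_filter, Set.mem_setOf_eq] at h₁ h₂
    have h' : s₁.erase v = s₂.erase v := h
    rw [← insert_erase h₁.2, h', insert_erase h₂.2]

lemma aux_choose_mono {a b : ℕ} (ha : 2 ≤ a) (h : a.choose 2 ≤ b.choose 2) : a ≤ b := by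
  by_contra hb
  push_neg at hb
  have : b.choose 2 < a.choose 2 := by
    calc b.choose 2 ≤ (a - 1).choose 2 := Nat.choose_le_choose 2 (by omega)
    _ < (a - 1).choose 2 + (a - 1) := by omega
    _ = (a - 1 + 1).choose 2 := by
        rw [Nat.choose_succ_succ (a - 1) 1, Nat.choose_one_right]; ring
    _ = a.choose 2 := by congr 1; omega
  omega

/-- The case `t = n - 3`, `n` even: if every vertex of an `n`-vertex graph `G`
(`n ≥ 10` even) lies in at least `C(n-3,2)` triangles, then `e(G) ≥ C(n,2) - n/2`. -/
theorem edges_case_t_eq_n_sub_three (n : ℕ) (hn : 10 ≤ n) (hne : Even n)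
    (V : Type) [Fintype V] [DecidableEq V] (hV : Fintype.card V = n)
    (G : SimpleGraph V) [DecidableRel G.Adj]
    (hdeg : ∀ v : V, Nat.choose (n - 3) 2 ≤ triangleDeg G v) :
    Nat.choose n 2 - n / 2 ≤ G.edgeFinset.card := by
  haveI : DecidableRel Gᶜ.Adj := fun a b => inferInstanceAs (Decidable (a ≠ b ∧ ¬G.Adj a b))
  -- every vertex has G-degree at least n - 3
  have hdegG : ∀ v : V, n - 3 ≤ G.degree v := by
    intro v
    have h1 := aux_tri_le G v
    have h2 : (((G.neighborFinset v).powersetCard 2).filter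
        (fun t => ∀ x ∈ t, ∀ y ∈ t, x ≠ y → G.Adj x y)).card ≤ (G.degree v).choose 2 := by
      calc _ ≤ ((G.neighborFinset v).powersetCard 2).card := card_filter_le _ _
      _ = (G.degree v).choose 2 := by rw [card_powersetCard, card_neighborFinset_eq_degree]
    exact aux_choose_mono (by omega) (le_trans (hdeg v) (le_trans h1 h2))
  have hdegH : ∀ v : V, Gᶜ.degree v ≤ 2 := by
    intro v
    have h1 := G.degree_compl (v := v)
    have h2 := hdegG v
    have h3 : G.degree v ≤ Fintype.card V - 1 := Nat.le_sub_one_of_lt (G.degree_lt_card_verts v)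
    omega
  by_contra hcon
  push_neg at hcon
  have hsum := aux_card_compl G
  rw [hV] at hsum
  have hH : n / 2 + 1 ≤ Gᶜ.edgeFinset.card := by
    have : n / 2 ≤ n.choose 2 := by
      have : n.choose 2 = n * (n - 1) / 2 := Nat.choose_two_right n
      omega
    omega
  -- find a vertex of H-degree 2
  have hsum2 : (∑ v : V, Gᶜ.degree v) = 2 * Gᶜ.edgeFinset.card :=
    Gᶜ.sum_degrees_eq_twice_card_edges
  have hex : ∃ v : V, Gᶜ.degree v = 2 := by
    by_contra hno
    push_neg at hno
    have : ∀ v : V, Gᶜ.degree v ≤ 1 := by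
      intro v; have := hdegH v; have := hno v; omega
    have hle : (∑ v : V, Gᶜ.degree v) ≤ Fintype.card V := by
      calc (∑ v : V, Gᶜ.degree v) ≤ ∑ _v : V, 1 := Finset.sum_le_sum (fun v _ => this v)
      _ = Fintype.card V := by simp
    rw [hV] at hle; omega
  obtain ⟨v, hv2⟩ := hex
  -- G-degree of v is exactly n - 3
  have hdv : G.degree v = n - 3 := by
    have h1 := G.degree_compl (v := v)
    have h2 := hdegG v
    have h3 : G.degree v ≤ Fintype.card V - 1 := Nat.le_sub_one_of_lt (G.degree_lt_card_verts v)
    omega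
  -- the G-neighborhood of v is a clique
  have hclique : ∀ x ∈ G.neighborFinset v, ∀ y ∈ G.neighborFinset v, x ≠ y → G.Adj x y := by
    have hcard : ((G.neighborFinset v).powersetCard 2).card = (n - 3).choose 2 := by
      rw [card_powersetCard, card_neighborFinset_eq_degree, hdv]
    have hfull : ((G.neighborFinset v).powersetCard 2).filter
        (fun t => ∀ x ∈ t, ∀ y ∈ t, x ≠ y → G.Adj x y)
        = (G.neighborFinset v).powersetCard 2 := by
      apply Finset.eq_of_subset_of_card_le (filter_subset _ _)
      rw [hcard]
      exact le_trans (hdeg v) (aux_tri_le G v)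
    intro x hx y hy hxy
    have hmem : {x, y} ∈ ((G.neighborFinset v).powersetCard 2).filter
        (fun t => ∀ x ∈ t, ∀ y ∈ t, x ≠ y → G.Adj x y) := by
      rw [hfull, mem_powersetCard]
      exact ⟨by intro z hz; simp at hz; rcases hz with h | h <;> subst h <;> assumption,
        card_pair hxy⟩
    have := (mem_filter.mp hmem).2
    exact this x (by simp) y (by simp) hxy
  -- the two H-neighbors of v
  obtain ⟨a, b, hab, hNH⟩ : ∃ a b, a ≠ b ∧ Gᶜ.neighborFinset v = {a, b} :=
    Finset.card_eq_two.mp (by rw [card_neighborFinset_eq_degree, hv2])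
  -- all H-edges are incident to v, a or b
  have hva : Gᶜ.Adj v a := by rw [← mem_neighborFinset, hNH]; simp
  have hvb : Gᶜ.Adj v b := by rw [← mem_neighborFinset, hNH]; simp
  have hinc : Gᶜ.edgeFinset ⊆ Gᶜ.incidenceFinset v ∪
      (Gᶜ.incidenceFinset a \ Gᶜ.incidenceFinset v) ∪
      (Gᶜ.incidenceFinset b \ Gᶜ.incidenceFinset v) := by
    intro e he
    refine Sym2.ind (fun x y he => ?_) e he
    rw [mem_edgeFinset, mem_edgeSet] at he
    have hG : ∀ z, z ≠ v → z ≠ a → z ≠ b → z ∈ G.neighborFinset v := by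
      intro z hzv hza hzb
      rw [mem_neighborFinset]
      by_contra hzn
      have : z ∈ Gᶜ.neighborFinset v := by
        rw [mem_neighborFinset]
        exact ⟨Ne.symm hzv, hzn⟩
      rw [hNH] at this
      simp at this
      tauto
    have hkey : x = v ∨ x = a ∨ x = b ∨ y = v ∨ y = a ∨ y = b := by
      by_contra hk
      push_neg at hk
      obtain ⟨h1, h2, h3, h4, h5, h6⟩ := hk
      have hx := hG x h1 h2 h3
      have hy := hG y h4 h5 h6
      exact he.2 (hclique x hx y hy he.ne)
    have hmemv : ∀ z ∈ ({v, a, b} : Finset V), z ∈ s(x,y) →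
        s(x,y) ∈ Gᶜ.incidenceFinset v ∪ (Gᶜ.incidenceFinset a \ Gᶜ.incidenceFinset v) ∪
        (Gᶜ.incidenceFinset b \ Gᶜ.incidenceFinset v) := by
      intro z hz hze
      by_cases hv' : v ∈ s(x,y)
      · exact mem_union.mpr (Or.inl (mem_union.mpr (Or.inl
          ((mem_incidenceFinset _ _ _).mpr ⟨(mem_edgeSet _).mpr he, hv'⟩))))
      · simp only [mem_insert, mem_singleton] at hz
        rcases hz with rfl | rfl | rfl
        · exact absurd hze hv'
        · exact mem_union.mpr (Or.inl (mem_union.mpr (Or.inr (mem_sdiff.mpr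
            ⟨(mem_incidenceFinset _ _ _).mpr ⟨(mem_edgeSet _).mpr he, hze⟩,
             fun hc => hv' ((mem_incidenceFinset _ _ _).mp hc).2⟩))))
        · exact mem_union.mpr (Or.inr (mem_sdiff.mpr
            ⟨(mem_incidenceFinset _ _ _).mpr ⟨(mem_edgeSet _).mpr he, hze⟩,
             fun hc => hv' ((mem_incidenceFinset _ _ _).mp hc).2⟩))
    rcases hkey with h | h | h | h | h | h
    · exact hmemv v (by simp) (by rw [← h]; simp [Sym2.mem_iff])
    · exact hmemv a (by simp) (by rw [← h]; simp [Sym2.mem_iff])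
    · exact hmemv b (by simp) (by rw [← h]; simp [Sym2.mem_iff])
    · exact hmemv v (by simp) (by rw [← h]; simp [Sym2.mem_iff])
    · exact hmemv a (by simp) (by rw [← h]; simp [Sym2.mem_iff])
    · exact hmemv b (by simp) (by rw [← h]; simp [Sym2.mem_iff])
  -- bound the pieces
  have hIv : (Gᶜ.incidenceFinset v).card = 2 := by
    rw [card_incidenceFinset_eq_degree, hv2]
  have hIa : (Gᶜ.incidenceFinset a \ Gᶜ.incidenceFinset v).card ≤ 1 := by
    have hsub : Gᶜ.incidenceFinset a \ Gᶜ.incidenceFinset v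
        ⊆ (Gᶜ.incidenceFinset a).erase s(v, a) := by
      intro e he
      rw [mem_sdiff] at he
      refine mem_erase.mpr ⟨?_, he.1⟩
      intro hc
      exact he.2 (by rw [hc]; exact (mem_incidenceFinset _ _ _).mpr ⟨(mem_edgeSet _).mpr hva, by simp⟩)
    calc _ ≤ ((Gᶜ.incidenceFinset a).erase s(v, a)).card := card_le_card hsub
    _ ≤ (Gᶜ.incidenceFinset a).card - 1 := by
        rw [card_erase_of_mem ((mem_incidenceFinset _ _ _).mpr ⟨(mem_edgeSet _).mpr hva, by simp⟩)]
    _ ≤ 1 := by rw [card_incidenceFinset_eq_degree]; have := hdegH a; omega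
  have hIb : (Gᶜ.incidenceFinset b \ Gᶜ.incidenceFinset v).card ≤ 1 := by
    have hsub : Gᶜ.incidenceFinset b \ Gᶜ.incidenceFinset v
        ⊆ (Gᶜ.incidenceFinset b).erase s(v, b) := by
      intro e he
      rw [mem_sdiff] at he
      refine mem_erase.mpr ⟨?_, he.1⟩
      intro hc
      exact he.2 (by rw [hc]; exact (mem_incidenceFinset _ _ _).mpr ⟨(mem_edgeSet _).mpr hvb, by simp⟩)
    calc _ ≤ ((Gᶜ.incidenceFinset b).erase s(v, b)).card := card_le_card hsub
    _ ≤ (Gᶜ.incidenceFinset b).card - 1 := by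
        rw [card_erase_of_mem ((mem_incidenceFinset _ _ _).mpr ⟨(mem_edgeSet _).mpr hvb, by simp⟩)]
    _ ≤ 1 := by rw [card_incidenceFinset_eq_degree]; have := hdegH b; omega
  have hfin : Gᶜ.edgeFinset.card ≤ 4 := by
    calc Gᶜ.edgeFinset.card ≤ _ := card_le_card hinc
    _ ≤ (Gᶜ.incidenceFinset v ∪ (Gᶜ.incidenceFinset a \ Gᶜ.incidenceFinset v)).card
        + (Gᶜ.incidenceFinset b \ Gᶜ.incidenceFinset v).card := card_union_le _ _
    _ ≤ (Gᶜ.incidenceFinset v).card + (Gᶜ.incidenceFinset a \ Gᶜ.incidenceFinset v).card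
        + (Gᶜ.incidenceFinset b \ Gᶜ.incidenceFinset v).card := by
        have := card_union_le (Gᶜ.incidenceFinset v)
          (Gᶜ.incidenceFinset a \ Gᶜ.incidenceFinset v)
        omega
    _ ≤ 4 := by omega
  omega
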